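/- Let d be a positive integer, A_0 a symmetric positive definite d×d real matrix, θ_0, θ* ∈ ℝ^d, and for s = 1,…,t let x_s ∈ ℝ^d, ξ_s ∈ ℝ, r_s = x_s^⊤ θ* + ξ_s. Define V_t = A_0 + Σ_{s=1}^t x_s x_s^⊤ and θ̂_t = V_t^{-1}(A_0 θ_0 + Σ_{s=1}^t r_s x_s). Let B_0 = ‖θ_0 − θ*‖_{A_0}, and suppose that the self-normalized noise term satisfies ‖Σ_{s=1}^t ξ_s x_s‖_{V_t^{-1}} ≤ β for some β ≥ 0. Then ‖θ̂_t − θ*‖_{V_t} ≤ β + B_0. -/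

import Mathlib

open Matrix BigOperators

section aux

variable {d : ℕ}

lemma myDot_nonneg {M : Matrix (Fin d) (Fin d) ℝ} (hM : M.PosSemidef) (u : Fin d → ℝ) :
    0 ≤ u ⬝ᵥ M *ᵥ u := by
  have := hM.dotProduct_mulVec_nonneg u
  simpa using this

lemma dot_cs (a b : Fin d → ℝ) :
    a ⬝ᵥ b ≤ Real.sqrt (a ⬝ᵥ a) * Real.sqrt (b ⬝ᵥ b) := by
  have h := Finset.sum_mul_sq_le_sq_mul_sq Finset.univ a b
  have h1 : a ⬝ᵥ b ≤ |a ⬝ᵥ b| := le_abs_self _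
  have h2 : |a ⬝ᵥ b| = Real.sqrt ((a ⬝ᵥ b) ^ 2) := (Real.sqrt_sq_eq_abs _).symm
  calc a ⬝ᵥ b ≤ Real.sqrt ((a ⬝ᵥ b) ^ 2) := h2 ▸ h1
    _ ≤ Real.sqrt ((∑ i, a i ^ 2) * ∑ i, b i ^ 2) := Real.sqrt_le_sqrt h
    _ = Real.sqrt (a ⬝ᵥ a) * Real.sqrt (b ⬝ᵥ b) := by
        rw [Real.sqrt_mul (by positivity)]
        congr 1 <;> · congr 1; simp [dotProduct, sq]

open scoped MatrixOrder in
lemma maha_cs {M : Matrix (Fin d) (Fin d) ℝ} (hM : M.PosSemidef) (u v : Fin d → ℝ) :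
    u ⬝ᵥ M *ᵥ v ≤ Real.sqrt (u ⬝ᵥ M *ᵥ u) * Real.sqrt (v ⬝ᵥ M *ᵥ v) := by
  set S := CFC.sqrt M with hS
  have hsym : Sᵀ = S := by
    have := (CFC.sqrt_nonneg M).posSemidef.isHermitian
    rwa [Matrix.IsHermitian, Matrix.conjTranspose_eq_transpose_of_trivial] at this
  have hMS : M = S * S := by
    rw [← CFC.sq_sqrt M hM.nonneg, sq]
  have key : ∀ w z : Fin d → ℝ, w ⬝ᵥ M *ᵥ z = (S *ᵥ w) ⬝ᵥ (S *ᵥ z) := by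
    intro w z
    rw [hMS, ← Matrix.mulVec_mulVec, Matrix.dotProduct_mulVec, ← Matrix.mulVec_transpose, hsym]
  rw [key u v, key u u, key v v]
  exact dot_cs _ _

lemma maha_triangle {M : Matrix (Fin d) (Fin d) ℝ} (hM : M.PosSemidef) (u v : Fin d → ℝ) :
    Real.sqrt ((u + v) ⬝ᵥ M *ᵥ (u + v)) ≤
      Real.sqrt (u ⬝ᵥ M *ᵥ u) + Real.sqrt (v ⬝ᵥ M *ᵥ v) := by
  set a := Real.sqrt (u ⬝ᵥ M *ᵥ u) with ha
  set b := Real.sqrt (v ⬝ᵥ M *ᵥ v) with hb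
  have ha0 : 0 ≤ a := Real.sqrt_nonneg _
  have hb0 : 0 ≤ b := Real.sqrt_nonneg _
  have hau : u ⬝ᵥ M *ᵥ u = a ^ 2 := (Real.sq_sqrt (myDot_nonneg hM u)).symm
  have hbv : v ⬝ᵥ M *ᵥ v = b ^ 2 := (Real.sq_sqrt (myDot_nonneg hM v)).symm
  have hsymm : v ⬝ᵥ M *ᵥ u = u ⬝ᵥ M *ᵥ v := by
    have hsym : Mᵀ = M := by
      have := hM.isHermitian
      rwa [Matrix.IsHermitian, Matrix.conjTranspose_eq_transpose_of_trivial] at this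
    rw [Matrix.dotProduct_mulVec, ← Matrix.mulVec_transpose, hsym, dotProduct_comm]
  have hexp : (u + v) ⬝ᵥ M *ᵥ (u + v) =
      u ⬝ᵥ M *ᵥ u + 2 * (u ⬝ᵥ M *ᵥ v) + v ⬝ᵥ M *ᵥ v := by
    rw [Matrix.mulVec_add, dotProduct_add, add_dotProduct, add_dotProduct, hsymm]; ring
  have hcs : u ⬝ᵥ M *ᵥ v ≤ a * b := maha_cs hM u v
  have : (u + v) ⬝ᵥ M *ᵥ (u + v) ≤ (a + b) ^ 2 := by
    rw [hexp, hau, hbv]; nlinarith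
  calc Real.sqrt ((u + v) ⬝ᵥ M *ᵥ (u + v)) ≤ Real.sqrt ((a + b) ^ 2) := Real.sqrt_le_sqrt this
    _ = a + b := by rw [Real.sqrt_sq (by linarith)]

lemma vecMulVec_mulVec' (u w : Fin d → ℝ) :
    vecMulVec u u *ᵥ w = (u ⬝ᵥ w) • u := by
  ext i
  simp only [Matrix.mulVec, Matrix.vecMulVec_apply, dotProduct, Pi.smul_apply, smul_eq_mul,
    Finset.sum_mul, Finset.mul_sum]
  exact Finset.sum_congr rfl fun j _ => by ring

lemma sum_mulVec' {ι : Type*} (s : Finset ι) (f : ι → Matrix (Fin d) (Fin d) ℝ)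
    (v : Fin d → ℝ) : (∑ i ∈ s, f i) *ᵥ v = ∑ i ∈ s, f i *ᵥ v := by
  ext j
  simp only [Matrix.mulVec, dotProduct, Finset.sum_apply, Matrix.sum_apply, Finset.sum_mul]
  rw [Finset.sum_comm]

lemma vecMulVec_psd (u : Fin d → ℝ) : (vecMulVec u u).PosSemidef := by
  refine Matrix.PosSemidef.of_dotProduct_mulVec_nonneg ?_ ?_
  · ext i j
    simp [Matrix.conjTranspose, Matrix.vecMulVec_apply, mul_comm]
  · intro w
    rw [vecMulVec_mulVec']
    have : w ⬝ᵥ (u ⬝ᵥ w) • u = (u ⬝ᵥ w) * (w ⬝ᵥ u) := by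
      simp [dotProduct, Finset.mul_sum]; congr 1; ext j; ring
    simp only [star_trivial]
    rw [this, dotProduct_comm w u]
    exact mul_self_nonneg _

end aux

/-- Deterministic core of the prior-centered confidence inequality:
if the self-normalized noise term is at most `β`, then
`‖θ̂_t − θ*‖_{V_t} ≤ β + B_0` with `B_0 = ‖θ_0 − θ*‖_{A_0}`. -/
theorem prior_centered_confidence
    (d t : ℕ) (hd : 0 < d)
    (A0 : Matrix (Fin d) (Fin d) ℝ) (hA0 : A0.PosDef)
    (θ0 θstar : Fin d → ℝ)
    (x : Fin t → Fin d → ℝ) (ξ : Fin t → ℝ)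
    (r : Fin t → ℝ) (hr : ∀ s, r s = x s ⬝ᵥ θstar + ξ s)
    (V : Matrix (Fin d) (Fin d) ℝ)
    (hV : V = A0 + ∑ s, vecMulVec (x s) (x s))
    (θhat : Fin d → ℝ)
    (hθhat : θhat = V⁻¹ *ᵥ (A0 *ᵥ θ0 + ∑ s, r s • x s))
    (B0 : ℝ)
    (hB0 : B0 = Real.sqrt ((θ0 - θstar) ⬝ᵥ A0 *ᵥ (θ0 - θstar)))
    (β : ℝ) (hβ0 : 0 ≤ β)
    (hβ : Real.sqrt ((∑ s, ξ s • x s) ⬝ᵥ V⁻¹ *ᵥ (∑ s, ξ s • x s)) ≤ β) :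
    Real.sqrt ((θhat - θstar) ⬝ᵥ V *ᵥ (θhat - θstar)) ≤ β + B0 := by
  set M : Matrix (Fin d) (Fin d) ℝ := ∑ s, vecMulVec (x s) (x s) with hM
  have hMpsd : M.PosSemidef := by
    rw [hM]
    exact Finset.sum_induction _ _ (fun _ _ ha hb => ha.add hb) .zero
      (fun s _ => vecMulVec_psd (x s))
  have hVpd : V.PosDef := hV ▸ hA0.add_posSemidef hMpsd
  have hVdet : IsUnit V.det := isUnit_iff_ne_zero.mpr (ne_of_gt hVpd.det_pos)
  have hVinv : (V⁻¹).PosDef := hVpd.inv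
  set e0 : Fin d → ℝ := θ0 - θstar with he0
  set a : Fin d → ℝ := A0 *ᵥ e0 with ha
  set b : Fin d → ℝ := ∑ s, ξ s • x s with hb
  -- key algebraic identity
  have hMθ : M *ᵥ θstar = ∑ s, (x s ⬝ᵥ θstar) • x s := by
    rw [hM, sum_mulVec']
    exact Finset.sum_congr rfl fun s _ => vecMulVec_mulVec' (x s) θstar
  have hVθ : V *ᵥ θstar = A0 *ᵥ θstar + ∑ s, (x s ⬝ᵥ θstar) • x s := by
    rw [hV, Matrix.add_mulVec, hMθ]
  have hsum : (A0 *ᵥ θ0 + ∑ s, r s • x s) - V *ᵥ θstar = a + b := by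
    rw [hVθ, ha, hb, Matrix.mulVec_sub]
    have : (∑ s, r s • x s) = (∑ s, (x s ⬝ᵥ θstar) • x s) + ∑ s, ξ s • x s := by
      rw [← Finset.sum_add_distrib]
      exact Finset.sum_congr rfl fun s _ => by rw [hr s, add_smul]
    rw [this]
    abel
  have hkey : θhat - θstar = V⁻¹ *ᵥ (a + b) := by
    have h1 : θstar = V⁻¹ *ᵥ (V *ᵥ θstar) := by
      rw [Matrix.mulVec_mulVec, Matrix.nonsing_inv_mul V hVdet, Matrix.one_mulVec]
    rw [hθhat]
    conv_lhs => rw [h1]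
    rw [← Matrix.mulVec_sub, hsum]
  -- quadratic form transfer
  have hVe : V *ᵥ (θhat - θstar) = a + b := by
    rw [hkey, Matrix.mulVec_mulVec, Matrix.mul_nonsing_inv V hVdet, Matrix.one_mulVec]
  have hquad : (θhat - θstar) ⬝ᵥ V *ᵥ (θhat - θstar) = (a + b) ⬝ᵥ V⁻¹ *ᵥ (a + b) := by
    rw [hVe, hkey, dotProduct_comm]
  rw [hquad]
  have htri := maha_triangle hVinv.posSemidef a b
  -- bound the a-term
  have haterm : Real.sqrt (a ⬝ᵥ V⁻¹ *ᵥ a) ≤ B0 := by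
    set u : Fin d → ℝ := V⁻¹ *ᵥ a with hu
    have hVu : V *ᵥ u = a := by
      rw [hu, Matrix.mulVec_mulVec, Matrix.mul_nonsing_inv V hVdet, Matrix.one_mulVec]
    have ht1 : a ⬝ᵥ V⁻¹ *ᵥ a = u ⬝ᵥ V *ᵥ u := by
      rw [hVu, dotProduct_comm, hu]
    have ht2 : u ⬝ᵥ V *ᵥ u = u ⬝ᵥ A0 *ᵥ e0 := by rw [hVu, ha]
    have hcs : u ⬝ᵥ A0 *ᵥ e0 ≤
        Real.sqrt (u ⬝ᵥ A0 *ᵥ u) * Real.sqrt (e0 ⬝ᵥ A0 *ᵥ e0) :=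
      maha_cs hA0.posSemidef u e0
    have hA0V : u ⬝ᵥ A0 *ᵥ u ≤ u ⬝ᵥ V *ᵥ u := by
      rw [hV, Matrix.add_mulVec, dotProduct_add]
      have := myDot_nonneg hMpsd u
      linarith
    set T : ℝ := u ⬝ᵥ V *ᵥ u with hT
    have hT0 : 0 ≤ T := myDot_nonneg hVpd.posSemidef u
    have hTB : T ≤ Real.sqrt T * Real.sqrt (e0 ⬝ᵥ A0 *ᵥ e0) := by
      calc T = u ⬝ᵥ A0 *ᵥ e0 := ht2
        _ ≤ Real.sqrt (u ⬝ᵥ A0 *ᵥ u) * Real.sqrt (e0 ⬝ᵥ A0 *ᵥ e0) := hcs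
        _ ≤ Real.sqrt T * Real.sqrt (e0 ⬝ᵥ A0 *ᵥ e0) := by
            apply mul_le_mul_of_nonneg_right (Real.sqrt_le_sqrt hA0V) (Real.sqrt_nonneg _)
    have hsqrtT : Real.sqrt T ≤ Real.sqrt (e0 ⬝ᵥ A0 *ᵥ e0) := by
      rcases eq_or_lt_of_le (Real.sqrt_nonneg T) with h0 | h0
      · rw [← h0]; exact Real.sqrt_nonneg _
      · have : Real.sqrt T * Real.sqrt T ≤ Real.sqrt T * Real.sqrt (e0 ⬝ᵥ A0 *ᵥ e0) := by
          rw [Real.mul_self_sqrt hT0]; exact hTB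
        exact le_of_mul_le_mul_left this h0
    rw [ht1, hB0]
    exact hsqrtT
  have hbterm : Real.sqrt (b ⬝ᵥ V⁻¹ *ᵥ b) ≤ β := hβ
  calc Real.sqrt ((a + b) ⬝ᵥ V⁻¹ *ᵥ (a + b))
      ≤ Real.sqrt (a ⬝ᵥ V⁻¹ *ᵥ a) + Real.sqrt (b ⬝ᵥ V⁻¹ *ᵥ b) := htri
    _ ≤ B0 + β := add_le_add haterm hbterm
    _ = β + B0 := add_comm _ _
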